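/- Let C = ℕ and let W = {c₁c₂c₃… ∈ ℕ^ω : ∃ i < j, c_i ≥ c_j} be the set of infinite sequences of natural numbers that are not strictly increasing. Then: (i) W is M_triv-strongly-monotone, i.e., the prefix preorder ⪯_W is total on finite words; (ii) W is M_triv-progress-consistent; and (iii) the prefix preorder ⪯_W is well-founded. -/

import Mathlib

set_option autoImplicit false

namespace RegularMemory

/-- Concatenation of a finite word with an infinite word. -/
def wcat {C : Type} (w : List C) (x : ℕ → C) : ℕ → C := fun n =>
  if h : n < w.length then w.get ⟨n, h⟩ else x (n - w.length)

/-- The infinite word `w^ω` (junk value if `w` is empty). -/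
noncomputable def wpow {C : Type} [Nonempty C] : List C → ℕ → C
  | [] => fun _ => Classical.arbitrary C
  | (a :: l) => fun n => (a :: l).get ⟨n % (a :: l).length, Nat.mod_lt n (Nat.succ_pos _)⟩

/-- Winning continuations `w⁻¹W` of the finite word `w` for the objective `W`. -/
def contAfter {C : Type} (W : Set (ℕ → C)) (w : List C) : Set (ℕ → C) :=
  {x | wcat w x ∈ W}

/-- Prefix preorder `w₁ ⪯_W w₂`. -/
def prefLe {C : Type} (W : Set (ℕ → C)) (w₁ w₂ : List C) : Prop :=
  contAfter W w₁ ⊆ contAfter W w₂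

/-- Strict prefix relation `w₁ ≺_W w₂`. -/
def prefLt {C : Type} (W : Set (ℕ → C)) (w₁ w₂ : List C) : Prop :=
  prefLe W w₁ w₂ ∧ ¬ prefLe W w₂ w₁

/-- Comparability for the prefix preorder. -/
def PrefComparable {C : Type} (W : Set (ℕ → C)) (w₁ w₂ : List C) : Prop :=
  prefLe W w₁ w₂ ∨ prefLe W w₂ w₁

/-- The general reachability objective derived from `A`: infinite words with a prefix in `A`. -/
def ReachObj {C : Type} (A : Set (List C)) : Set (ℕ → C) :=
  {x | ∃ n : ℕ, (List.ofFn fun i : Fin n => x i) ∈ A}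

/-- The general safety objective derived from `A`. -/
def SafeObj {C : Type} (A : Set (List C)) : Set (ℕ → C) :=
  (ReachObj A)ᶜ

/-- The prefix preorder of `W` has finitely many equivalence classes. -/
def FinClasses {C : Type} (W : Set (ℕ → C)) : Prop :=
  (Set.range fun w : List C => contAfter W w).Finite

/-- The prefix preorder of `W` is well-founded:
every nonempty chain contains a minimal element. -/
def PrefWellFounded {C : Type} (W : Set (ℕ → C)) : Prop :=
  ∀ S : Set (List C), S.Nonempty →
    (∀ w₁ ∈ S, ∀ w₂ ∈ S, PrefComparable W w₁ w₂) →
    ∃ w₀ ∈ S, ∀ w ∈ S, ¬ prefLt W w w₀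

/-- Chromatic memory structure. -/
structure MemStruct (C : Type) where
  M : Type
  init : M
  upd : M → C → M

/-- Extension of the update function to finite words. -/
def MemStruct.updStar {C : Type} (N : MemStruct C) (m : N.M) (w : List C) : N.M :=
  w.foldl N.upd m

/-- The trivial one-state memory structure. -/
def trivMem (C : Type) : MemStruct C :=
  ⟨Unit, (), fun _ _ => ()⟩

/-- `W` is `N`-strongly-monotone. -/
def StronglyMonotone {C : Type} (N : MemStruct C) (W : Set (ℕ → C)) : Prop :=
  ∀ w₁ w₂ : List C,
    N.updStar N.init w₁ = N.updStar N.init w₂ → PrefComparable W w₁ w₂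

/-- `W` is `N`-progress-consistent. -/
def ProgressConsistent {C : Type} [Nonempty C] (N : MemStruct C) (W : Set (ℕ → C)) : Prop :=
  ∀ (m : N.M) (w₁ w₂ : List C),
    N.updStar N.init w₁ = m → N.updStar m w₂ = m →
    prefLt W w₁ (w₁ ++ w₂) → wcat w₁ (wpow w₂) ∈ W

/-- Two-player arena with colored edges; Player-1 vertices have outgoing edges
(so that strategies of Player 1 exist). -/
structure Arena (C : Type) where
  V : Type
  P1 : V → Prop
  E : Set (V × C × V)
  succ : ∀ v : V, P1 v → ∃ e ∈ E, e.1 = v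

namespace Arena

/-- Valid histories starting at a given vertex. -/
def HistFrom {C : Type} (A : Arena C) : A.V → List (A.V × C × A.V) → Prop
  | _, [] => True
  | v, e :: l => e ∈ A.E ∧ e.1 = v ∧ HistFrom A e.2.2 l

/-- Endpoint of a history. -/
def endFrom {C : Type} (A : Arena C) : A.V → List (A.V × C × A.V) → A.V
  | v, [] => v
  | _, e :: l => endFrom A e.2.2 l

/-- Infinite plays from a vertex. -/
def PlayFrom {C : Type} (A : Arena C) (v : A.V) (π : ℕ → A.V × C × A.V) : Prop :=
  (π 0).1 = v ∧ ∀ n : ℕ, π n ∈ A.E ∧ (π n).2.2 = (π (n + 1)).1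

/-- Colors along a play. -/
def playCol {C V : Type} (π : ℕ → V × C × V) : ℕ → C :=
  fun n => (π n).2.1

/-- Strategies of Player 1: on every valid history ending in a Player-1 vertex,
the strategy picks an edge leaving that vertex. -/
structure Strategy {C : Type} (A : Arena C) where
  next : A.V → List (A.V × C × A.V) → A.V × C × A.V
  legal : ∀ (v : A.V) (l : List (A.V × C × A.V)),
    A.HistFrom v l → A.P1 (A.endFrom v l) →
      next v l ∈ A.E ∧ (next v l).1 = A.endFrom v l

/-- A play from `v` is consistent with the strategy `σ`. -/
def Strategy.Consistent {C : Type} {A : Arena C} (σ : A.Strategy) (v : A.V)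
    (π : ℕ → A.V × C × A.V) : Prop :=
  ∀ n : ℕ, A.P1 (A.endFrom v (List.ofFn fun i : Fin n => π i)) →
    π n = σ.next v (List.ofFn fun i : Fin n => π i)

/-- `σ` is winning from `v` for the objective `W`. -/
def Strategy.WinningFrom {C : Type} {A : Arena C} (σ : A.Strategy)
    (W : Set (ℕ → C)) (v : A.V) : Prop :=
  ∀ π : ℕ → A.V × C × A.V, A.PlayFrom v π → σ.Consistent v π → playCol π ∈ W

/-- `σ` is optimal in `(A, W)`: winning from every vertex from which
Player 1 has some winning strategy. -/
def Strategy.Optimal {C : Type} {A : Arena C} (σ : A.Strategy) (W : Set (ℕ → C)) : Prop :=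
  ∀ v : A.V, (∃ σ' : A.Strategy, σ'.WinningFrom W v) → σ.WinningFrom W v

/-- `σ` is based on the memory structure `N`. -/
def Strategy.BasedOn {C : Type} {A : Arena C} (σ : A.Strategy) (N : MemStruct C) : Prop :=
  ∃ nxt : A.V → N.M → A.V × C × A.V,
    ∀ (v : A.V) (l : List (A.V × C × A.V)),
      A.HistFrom v l → A.P1 (A.endFrom v l) →
        σ.next v l = nxt (A.endFrom v l) (N.updStar N.init (l.map fun e => e.2.1))

/-- Finite arena: finitely many vertices and edges. -/
def IsFinite {C : Type} (A : Arena C) : Prop := Finite A.V ∧ A.E.Finite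

/-- Finitely branching arena. -/
def FinBranching {C : Type} (A : Arena C) : Prop :=
  ∀ v : A.V, {e ∈ A.E | e.1 = v}.Finite

/-- One-player arena of Player 1. -/
def OneP1 {C : Type} (A : Arena C) : Prop := ∀ v : A.V, A.P1 v

end Arena

/-- `N` suffices to play optimally for `W` in all arenas of the class `P`. -/
def SufficesIn {C : Type} (N : MemStruct C) (W : Set (ℕ → C))
    (P : Arena C → Prop) : Prop :=
  ∀ A : Arena C, P A → ∃ σ : A.Strategy, σ.BasedOn N ∧ σ.Optimal W

/-- Deterministic automaton (with complete transition function). -/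
structure DetAuto (C : Type) where
  Q : Type
  init : Q
  δ : Q → C → Q
  F : Set Q

/-- Extension of the transition function to finite words. -/
def DetAuto.δStar {C : Type} (D : DetAuto C) (q : D.Q) (w : List C) : D.Q :=
  w.foldl D.δ q

/-- Language recognized by `D`. -/
def DetAuto.lang {C : Type} (D : DetAuto C) : Set (List C) :=
  {w | D.δStar D.init w ∈ D.F}

/-- Prefix preorder extended to automaton states. -/
def statePrefLe {C : Type} (D : DetAuto C) (W : Set (ℕ → C)) (q₁ q₂ : D.Q) : Prop :=
  ∀ w₁ w₂ : List C,
    D.δStar D.init w₁ = q₁ → D.δStar D.init w₂ = q₂ → prefLe W w₁ w₂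

def statePrefLt {C : Type} (D : DetAuto C) (W : Set (ℕ → C)) (q₁ q₂ : D.Q) : Prop :=
  statePrefLe D W q₁ q₂ ∧ ¬ statePrefLe D W q₂ q₁

def StateComparable {C : Type} (D : DetAuto C) (W : Set (ℕ → C)) (q₁ q₂ : D.Q) : Prop :=
  statePrefLe D W q₁ q₂ ∨ statePrefLe D W q₂ q₁

/-- Monotone decomposition of `D` with `k` sets. -/
def MonotoneDecomposition {C : Type} (D : DetAuto C) (W : Set (ℕ → C))
    {k : ℕ} (Γ : Fin k → Set D.Q) : Prop :=
  (∀ q : D.Q, ∃ i : Fin k, q ∈ Γ i) ∧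
  (∀ (c : C) (i : Fin k), ∃ j : Fin k, (fun q => D.δ q c) '' Γ i ⊆ Γ j) ∧
  (∀ i : Fin k, ∀ q₁ ∈ Γ i, ∀ q₂ ∈ Γ i, StateComparable D W q₁ q₂)

end RegularMemory


namespace RegularMemory

/-- The general reachability objective over `C = ℕ` of infinite sequences that are
not strictly increasing. -/
def NotStrictlyIncreasing : Set (ℕ → ℕ) :=
  {x | ∃ i j : ℕ, i < j ∧ x j ≤ x i}

lemma wcat_lt {C : Type} (w : List C) (x : ℕ → C) {n : ℕ} (h : n < w.length) :
    wcat w x n = w.get ⟨n, h⟩ := dif_pos h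

lemma wcat_ge {C : Type} (w : List C) (x : ℕ → C) {n : ℕ} (h : w.length ≤ n) :
    wcat w x n = x (n - w.length) := dif_neg (not_lt.2 h)

/-- `W ⊆ w⁻¹W` always for this objective. -/
lemma nsi_W_sub (w : List ℕ) (x : ℕ → ℕ) (hx : x ∈ NotStrictlyIncreasing) :
    wcat w x ∈ NotStrictlyIncreasing := by
  obtain ⟨i, j, hij, hle⟩ := hx
  refine ⟨i + w.length, j + w.length, by omega, ?_⟩
  rw [wcat_ge w x (by omega), wcat_ge w x (by omega),
    Nat.add_sub_cancel, Nat.add_sub_cancel]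
  exact hle

lemma nsi_not_pairwise {w : List ℕ} (h : ¬ w.Pairwise (· < ·)) :
    ∃ i j : Fin w.length, (i : ℕ) < (j : ℕ) ∧ w.get j ≤ w.get i := by
  rw [List.pairwise_iff_get] at h
  push_neg at h
  obtain ⟨i, j, hij, hle⟩ := h
  exact ⟨i, j, hij, hle⟩

/-- If `w` is not strictly increasing, everything is below it. -/
lemma nsi_le_univ {w : List ℕ} (h : ¬ w.Pairwise (· < ·)) (w' : List ℕ) :
    prefLe NotStrictlyIncreasing w' w := by
  intro x _
  obtain ⟨i, j, hij, hle⟩ := nsi_not_pairwise h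
  refine ⟨(i : ℕ), (j : ℕ), hij, ?_⟩
  rw [wcat_lt w x i.isLt, wcat_lt w x j.isLt]
  exact hle

lemma nsi_le_getLast {w : List ℕ} (hw : w.Pairwise (· < ·)) (hne : w ≠ [])
    {c : ℕ} (hc : c ∈ w) : c ≤ w.getLast hne := by
  obtain ⟨i, rfl⟩ := List.mem_iff_get.1 hc
  rw [List.getLast_eq_getElem]
  rw [List.pairwise_iff_get] at hw
  have hi1 : (i : ℕ) ≤ w.length - 1 := by omega
  rcases lt_or_eq_of_le hi1 with h | h
  · exact le_of_lt (hw i ⟨w.length - 1, by omega⟩ (by simpa [Fin.lt_def] using h))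
  · have : i = (⟨w.length - 1, by omega⟩ : Fin w.length) := Fin.ext h
    rw [this]
    exact le_refl _

lemma nsi_main_mono (w₁ w₂ : List ℕ) (h₁ : w₁.Pairwise (· < ·)) (h₂ : w₂ ≠ [])
    (hle : ∀ a ∈ w₁, a ≤ w₂.getLast h₂) :
    prefLe NotStrictlyIncreasing w₁ w₂ := by
  intro x hx
  obtain ⟨i, j, hij, hvle⟩ := hx
  have hlen₂ : 0 < w₂.length := List.length_pos_iff.2 h₂
  by_cases hj : j < w₁.length
  · -- both inside w₁ : contradicts strict increase
    exfalso
    have hi : i < w₁.length := lt_trans hij hj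
    rw [wcat_lt w₁ x hj, wcat_lt w₁ x hi] at hvle
    have := (List.pairwise_iff_get.1 h₁) ⟨i, hi⟩ ⟨j, hj⟩ hij
    exact absurd hvle (not_le.2 this)
  · push_neg at hj
    by_cases hi : i < w₁.length
    · -- i in w₁, j in x
      rw [wcat_lt w₁ x hi, wcat_ge w₁ x hj] at hvle
      have hx2 : x (j - w₁.length) ≤ w₂.getLast h₂ :=
        le_trans hvle (hle _ (List.get_mem _ _))
      refine ⟨w₂.length - 1, (j - w₁.length) + w₂.length, by omega, ?_⟩
      rw [wcat_lt w₂ x (n := w₂.length - 1) (by omega),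
        wcat_ge w₂ x (n := (j - w₁.length) + w₂.length) (by omega), Nat.add_sub_cancel]
      rw [List.getLast_eq_getElem] at hx2
      exact hx2
    · -- both in x
      push_neg at hi
      rw [wcat_ge w₁ x hj, wcat_ge w₁ x hi] at hvle
      refine ⟨(i - w₁.length) + w₂.length, (j - w₁.length) + w₂.length, by omega, ?_⟩
      rw [wcat_ge w₂ x (n := (i - w₁.length) + w₂.length) (by omega),
        wcat_ge w₂ x (n := (j - w₁.length) + w₂.length) (by omega),
        Nat.add_sub_cancel, Nat.add_sub_cancel]
      exact hvle

open Classical in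
/-- Value of a finite word for this objective. -/
noncomputable def nsiVal (w : List ℕ) : WithBot (WithTop ℕ) :=
  if h : w.Pairwise (· < ·) then
    if hne : w = [] then ⊥ else ((w.getLast hne : ℕ) : WithTop ℕ)
  else ⊤

lemma nsi_prefLe_of_val_le (a b : List ℕ) (h : nsiVal a ≤ nsiVal b) :
    prefLe NotStrictlyIncreasing a b := by
  by_cases hb : b.Pairwise (· < ·)
  swap
  · exact nsi_le_univ hb a
  by_cases ha : a.Pairwise (· < ·)
  swap
  · -- nsiVal a = ⊤, so nsiVal b = ⊤, impossible
    exfalso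
    rw [nsiVal, dif_neg ha] at h
    rw [nsiVal, dif_pos hb] at h
    have hb' := top_le_iff.1 h
    by_cases hne : b = []
    · rw [dif_pos hne] at hb'
      exact absurd hb' (by simp)
    · rw [dif_neg hne] at hb'
      have : ((b.getLast hne : ℕ) : WithTop ℕ) = ⊤ :=
        WithBot.coe_injective (by simpa using hb')
      exact absurd this (by simp)
  by_cases hane : a = []
  · -- contAfter [] = W ⊆ anything
    subst hane
    intro x hx
    have hx' : x ∈ NotStrictlyIncreasing := by
      have : wcat ([] : List ℕ) x = x := by
        funext n; simp [wcat]
      rwa [contAfter, Set.mem_setOf_eq, this] at hx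
    exact nsi_W_sub b x hx'
  · -- a nonempty strictly increasing
    rw [nsiVal, dif_pos ha, dif_neg hane] at h
    by_cases hbne : b = []
    · exfalso
      rw [nsiVal, dif_pos hb, dif_pos hbne] at h
      exact absurd (le_bot_iff.1 h) (by simp)
    · rw [nsiVal, dif_pos hb, dif_neg hbne] at h
      have hlast : a.getLast hane ≤ b.getLast hbne := by
        have := WithBot.coe_le_coe.1 h
        exact_mod_cast this
      exact nsi_main_mono a b ha hbne
        (fun c hc => le_trans (nsi_le_getLast ha hane hc) hlast)

/-- this objective is `M_triv`-strongly-monotone (its prefix preorder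
is total), `M_triv`-progress-consistent, and its prefix preorder is well-founded. -/
theorem notStrictlyIncreasing_properties :
    (∀ w₁ w₂ : List ℕ, PrefComparable NotStrictlyIncreasing w₁ w₂) ∧
    ProgressConsistent (trivMem ℕ) NotStrictlyIncreasing ∧
    PrefWellFounded NotStrictlyIncreasing := by
  refine ⟨?_, ?_, ?_⟩
  · intro w₁ w₂
    rcases le_total (nsiVal w₁) (nsiVal w₂) with h | h
    · exact Or.inl (nsi_prefLe_of_val_le _ _ h)
    · exact Or.inr (nsi_prefLe_of_val_le _ _ h)
  · intro m w₁ w₂ _ _ hlt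
    cases w₂ with
    | nil =>
      exfalso
      rw [List.append_nil] at hlt
      exact hlt.2 hlt.1
    | cons a l =>
      refine ⟨w₁.length, w₁.length + (a :: l).length, by simp, ?_⟩
      rw [wcat_ge w₁ _ (n := w₁.length) (le_refl _),
        wcat_ge w₁ _ (n := w₁.length + (a :: l).length) (by omega),
        Nat.sub_self, Nat.add_sub_cancel_left]
      simp [wpow, Nat.mod_self]
  · intro S hS hchain
    obtain ⟨t, ⟨w₀, hw₀S, rfl⟩, hmin⟩ :=
      (wellFounded_lt (α := WithBot (WithTop ℕ))).has_min (nsiVal '' S)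
        (hS.image nsiVal)
    refine ⟨w₀, hw₀S, ?_⟩
    intro w hw hlt
    have h1 : ¬ nsiVal w < nsiVal w₀ := hmin _ ⟨w, hw, rfl⟩
    exact hlt.2 (nsi_prefLe_of_val_le _ _ (not_lt.1 h1))

end RegularMemory
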